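/- Let φ : ℝⁿ → ℝ be a smooth ℤⁿ-periodic function such that u(x) = ½|x|² + φ(x) has positive definite Hessian everywhere. Then the gradient map ∇u : ℝⁿ → ℝⁿ is a bijection satisfying ∇u(x + k) = ∇u(x) + k for all k ∈ ℤⁿ, and the Legendre transform v(y) = sup_{x ∈ ℝⁿ} (y·x − u(x)) is a smooth function of the form v(y) = ½|y|² + ψ(y) for a smooth ℤⁿ-periodic function ψ : ℝⁿ → ℝ, characterized by v(∇u(x)) + u(x) = ∇u(x)·x for all x. -/

import Mathlib

open MeasureTheory Matrix

/-- Partial derivative in the `i`-th coordinate direction. -/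
noncomputable def pd {n : ℕ} (i : Fin n) (f : (Fin n → ℝ) → ℝ) (x : Fin n → ℝ) : ℝ :=
  fderiv ℝ f x (Pi.single i 1)

/-- Hessian matrix `(u_{ij})` of `u` at `x`. -/
noncomputable def hess {n : ℕ} (u : (Fin n → ℝ) → ℝ) (x : Fin n → ℝ) :
    Matrix (Fin n) (Fin n) ℝ :=
  Matrix.of fun i j => pd i (pd j u) x

/-- `f : ℝⁿ → ℝ` is ℤⁿ-periodic. -/
def ZPer {n : ℕ} (f : (Fin n → ℝ) → ℝ) : Prop :=
  ∀ (x : Fin n → ℝ) (k : Fin n → ℤ), f (x + fun i => (k i : ℝ)) = f x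

/-- Abreu's operator `∑_{i,j} ∂²u^{ij}/∂x_i∂x_j`, where `(u^{ij})` is the inverse Hessian. -/
noncomputable def abreuOp {n : ℕ} (u : (Fin n → ℝ) → ℝ) (x : Fin n → ℝ) : ℝ :=
  ∑ i, ∑ j, pd i (pd j (fun z => (hess u z)⁻¹ i j)) x

section
variable {n : ℕ}

lemma clm_sum {M : Type*} [NormedAddCommGroup M] [NormedSpace ℝ M]
    (L : (Fin n → ℝ) →L[ℝ] M) (w : Fin n → ℝ) :
    L w = ∑ j, w j • L (Pi.single j 1) := by
  have hw : w = ∑ j, w j • (Pi.single j 1 : Fin n → ℝ) := by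
    funext t
    simp [Pi.single_apply, Finset.sum_ite_eq']
  nth_rewrite 1 [hw]
  rw [map_sum]
  simp

lemma hasFDerivAt_quad (x : Fin n → ℝ) :
    HasFDerivAt (fun y : Fin n → ℝ => (1/2:ℝ) * ∑ j, y j ^ 2)
      (∑ j, x j • ContinuousLinearMap.proj (R := ℝ) (φ := fun _ : Fin n => ℝ) j) x := by
  have h1 : ∀ j ∈ Finset.univ, HasFDerivAt (fun y : Fin n → ℝ => y j ^ 2)
      ((2 * x j) • ContinuousLinearMap.proj (R := ℝ) (φ := fun _ : Fin n => ℝ) j) x := by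
    intro j _
    have h := (hasFDerivAt_apply (𝕜 := ℝ) j x).mul (hasFDerivAt_apply (𝕜 := ℝ) j x)
    have h2 : (fun y : Fin n → ℝ => y j * y j) = fun y => y j ^ 2 := by
      funext y; ring
    rw [show ((fun f : Fin n → ℝ => f j) * fun f => f j) = fun y => y j * y j from rfl, h2] at h
    refine h.congr_fderiv (Eq.symm ?_)
    ext w
    simp
    ring
  have hs := HasFDerivAt.fun_sum h1
  have h3 := hs.const_mul (1/2:ℝ)
  refine h3.congr_fderiv (Eq.symm ?_)
  ext w
  simp [Finset.mul_sum]
  ring_nf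

variable (φ : (Fin n → ℝ) → ℝ)

/-- the potential -/
noncomputable def U : (Fin n → ℝ) → ℝ := fun y => (1 / 2 : ℝ) * ∑ j, y j ^ 2 + φ y

/-- gradient map -/
noncomputable def gg : (Fin n → ℝ) → (Fin n → ℝ) := fun x i => pd i (U φ) x

variable {φ}

lemma hasFDerivAt_U (hφ : ContDiff ℝ (⊤ : ℕ∞) φ) (x : Fin n → ℝ) :
    HasFDerivAt (U φ)
      ((∑ j, x j • ContinuousLinearMap.proj (R := ℝ) (φ := fun _ : Fin n => ℝ) j)
        + fderiv ℝ φ x) x :=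
  (hasFDerivAt_quad x).add (hφ.differentiable (by norm_num) x).hasFDerivAt

lemma contDiff_U (hφ : ContDiff ℝ (⊤ : ℕ∞) φ) : ContDiff ℝ (⊤ : ℕ∞) (U φ) := by
  exact ((contDiff_const (c := (1/2:ℝ))).mul (ContDiff.sum fun j (_ : j ∈ Finset.univ) => (contDiff_apply ℝ ℝ j).pow 2)).add hφ

lemma pd_U (hφ : ContDiff ℝ (⊤ : ℕ∞) φ) (x : Fin n → ℝ) (i : Fin n) :
    pd i (U φ) x = x i + pd i φ x := by
  unfold pd
  rw [(hasFDerivAt_U hφ x).fderiv]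
  simp [Pi.single_apply, Finset.sum_ite_eq']

lemma gg_eq (hφ : ContDiff ℝ (⊤ : ℕ∞) φ) (x : Fin n → ℝ) :
    gg φ x = fun i => x i + pd i φ x := by
  funext i; exact pd_U hφ x i

-- periodicity of fderiv
lemma fderiv_per (hφ : ContDiff ℝ (⊤ : ℕ∞) φ) (hper : ZPer φ) (x : Fin n → ℝ) (k : Fin n → ℤ) :
    fderiv ℝ φ (x + fun i => (k i : ℝ)) = fderiv ℝ φ x := by
  have h1 : HasFDerivAt (fun z : Fin n → ℝ => φ (z + fun i => (k i : ℝ)))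
      (fderiv ℝ φ (x + fun i => (k i : ℝ))) x := by
    have := ((hφ.differentiable (by norm_num)) (x + fun i => (k i : ℝ))).hasFDerivAt
    have h2 := this.comp x ((hasFDerivAt_id x).add_const (fun i => (k i : ℝ)))
    exact h2
  have h3 : (fun z : Fin n → ℝ => φ (z + fun i => (k i : ℝ))) = φ := by
    funext z; exact hper z k
  rw [h3] at h1
  exact h1.fderiv.symm

lemma gg_per (hφ : ContDiff ℝ (⊤ : ℕ∞) φ) (hper : ZPer φ) (x : Fin n → ℝ) (k : Fin n → ℤ)
    (i : Fin n) : gg φ (x + fun i => (k i : ℝ)) i = gg φ x i + (k i : ℝ) := by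
  simp only [gg, pd_U hφ]
  unfold pd
  rw [fderiv_per hφ hper x k]
  simp [Pi.add_apply]
  ring

lemma contDiff_pd {f : (Fin n → ℝ) → ℝ} (hf : ContDiff ℝ (⊤ : ℕ∞) f) (i : Fin n) :
    ContDiff ℝ (⊤ : ℕ∞) (pd i f) := by
  have h := hf.fderiv_right (m := ((⊤:ℕ∞) : WithTop ℕ∞)) (by exact_mod_cast le_rfl)
  exact h.clm_apply contDiff_const

lemma contDiff_gg (hφ : ContDiff ℝ (⊤ : ℕ∞) φ) : ContDiff ℝ (⊤ : ℕ∞) (gg φ) :=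
  contDiff_pi.2 fun i => contDiff_pd (contDiff_U hφ) i

-- second derivative
lemma hasFDerivAt_pd (hφ : ContDiff ℝ (⊤ : ℕ∞) φ) (x : Fin n → ℝ) (i : Fin n) :
    HasFDerivAt (pd i (U φ))
      ((fderiv ℝ (fderiv ℝ (U φ)) x).flip (Pi.single i 1)) x := by
  have hU := contDiff_U hφ
  have hd : HasFDerivAt (fderiv ℝ (U φ)) (fderiv ℝ (fderiv ℝ (U φ)) x) x :=
    (((hU.fderiv_right (m := ((⊤:ℕ∞) : WithTop ℕ∞)) (by exact_mod_cast le_rfl)).differentiable (by simp)) x).hasFDerivAt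
  have happ := (ContinuousLinearMap.apply ℝ ℝ (Pi.single i 1 : Fin n → ℝ)).hasFDerivAt.comp x hd
  refine happ.congr_fderiv ?_
  ext w
  rfl

lemma hess_eq (hφ : ContDiff ℝ (⊤ : ℕ∞) φ) (x : Fin n → ℝ) (i j : Fin n) :
    hess (U φ) x i j = fderiv ℝ (fderiv ℝ (U φ)) x (Pi.single i 1) (Pi.single j 1) := by
  show pd i (pd j (U φ)) x = _
  rw [show pd i (pd j (U φ)) x = fderiv ℝ (pd j (U φ)) x (Pi.single i 1) from rfl,
    (hasFDerivAt_pd hφ x j).fderiv]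
  rfl

lemma hasFDerivAt_gg (hφ : ContDiff ℝ (⊤ : ℕ∞) φ)
    (hpos : ∀ x, (hess (U φ) x).PosDef) (x : Fin n → ℝ) :
    HasFDerivAt (gg φ)
      (LinearMap.toContinuousLinearMap (Matrix.mulVecLin (hess (U φ) x))) x := by
  rw [hasFDerivAt_pi']
  intro i
  have h := hasFDerivAt_pd hφ x i
  refine h.congr_fderiv (Eq.symm ?_)
  ext w
  show ((hess (U φ) x) *ᵥ w) i = fderiv ℝ (fderiv ℝ (U φ)) x w (Pi.single i 1)
  rw [clm_sum (fderiv ℝ (fderiv ℝ (U φ)) x) w]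
  simp only [ContinuousLinearMap.coe_sum', Finset.sum_apply, ContinuousLinearMap.coe_smul',
    Pi.smul_apply]
  rw [Matrix.mulVec]
  simp only [dotProduct]
  apply Finset.sum_congr rfl
  intro j _
  rw [smul_eq_mul, mul_comm]
  congr 1
  rw [← hess_eq hφ x j i]
  have hsym := (hpos x).1
  have := congrFun (congrFun hsym.symm j) i  -- hess conjTranspose = hess
  simpa [Matrix.conjTranspose_apply] using this.symm

-- strict monotonicity of the gradient map
lemma gg_mono (hφ : ContDiff ℝ (⊤ : ℕ∞) φ) (hpos : ∀ x, (hess (U φ) x).PosDef)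
    {x z : Fin n → ℝ} (hxz : x ≠ z) :
    0 < ∑ i, (gg φ x i - gg φ z i) * (x i - z i) := by
  set d : Fin n → ℝ := x - z with hd
  have hd0 : d ≠ 0 := sub_ne_zero.2 hxz
  set F : ℝ → ℝ := fun t => ∑ i, gg φ (z + t • d) i * d i with hF
  have hder : ∀ t : ℝ, HasDerivAt F (dotProduct d (hess (U φ) (z + t • d) *ᵥ d)) t := by
    intro t
    have hc : HasDerivAt (fun t : ℝ => z + t • d) d t := by
      simpa using ((hasDerivAt_id t).smul_const d).const_add z
    have hgg := (hasFDerivAt_gg hφ hpos (z + t • d)).comp_hasDerivAt t hc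
    have : HasDerivAt F (∑ i, (hess (U φ) (z + t • d) *ᵥ d) i * d i) t := by
      apply HasDerivAt.fun_sum
      intro i _
      exact ((hasDerivAt_pi.1 hgg) i).mul_const (d i)
    convert this using 1
    rw [dotProduct]
    exact Finset.sum_congr rfl fun i _ => by ring
  have hmono : StrictMono F := by
    apply strictMono_of_deriv_pos
    intro t
    rw [(hder t).deriv]
    have := (hpos (z + t • d)).dotProduct_mulVec_pos hd0
    simpa using this
  have h01 := hmono (show (0:ℝ) < 1 by norm_num)
  have hF0 : F 0 = ∑ i, gg φ z i * d i := by simp [hF]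
  have hzd : z + d = x := by rw [hd]; abel
  have hF1 : F 1 = ∑ i, gg φ x i * d i := by
    simp only [hF, one_smul, hzd]
  have : 0 < ∑ i, gg φ x i * d i - ∑ i, gg φ z i * d i := by
    rw [← hF0, ← hF1]; linarith
  rw [← Finset.sum_sub_distrib] at this
  convert this using 1
  refine Finset.sum_congr rfl fun i _ => ?_
  have hdi : d i = x i - z i := rfl
  rw [hdi]; ring

lemma gg_inj (hφ : ContDiff ℝ (⊤ : ℕ∞) φ) (hpos : ∀ x, (hess (U φ) x).PosDef) :
    Function.Injective (gg φ) := by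
  intro x z h
  by_contra hxz
  have := gg_mono hφ hpos hxz
  rw [h] at this
  simp at this

-- boundedness of periodic continuous function
lemma phi_bound (hφ : ContDiff ℝ (⊤ : ℕ∞) φ) (hper : ZPer φ) :
    ∃ C : ℝ, 0 ≤ C ∧ ∀ x, |φ x| ≤ C := by
  obtain ⟨C, hC⟩ := (isCompact_Icc (a := (0 : Fin n → ℝ)) (b := 1)).exists_bound_of_continuousOn
    (hφ.continuous.continuousOn)
  refine ⟨max C 0, le_max_right _ _, fun x => ?_⟩
  set z : Fin n → ℝ := fun i => Int.fract (x i) with hz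
  have hzi : ∀ i, z i = x i - (⌊x i⌋ : ℝ) := fun i => by show Int.fract (x i) = _; rw [Int.fract]
  have hx : x = z + fun i => ((⌊x i⌋ : ℤ) : ℝ) := by
    funext i
    show x i = z i + (⌊x i⌋ : ℝ)
    rw [hzi i]; ring
  have hmem : z ∈ Set.Icc (0 : Fin n → ℝ) 1 := by
    rw [Set.mem_Icc]
    constructor
    · rw [Pi.le_def]; intro i; exact Int.fract_nonneg _
    · rw [Pi.le_def]; intro i; exact (Int.fract_lt_one _).le
  have : φ x = φ z := by
    rw [hx, hper z (fun i => ⌊x i⌋)]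
  rw [this]
  exact le_trans (by simpa using hC z hmem) (le_max_left _ _)

variable (φ) in
/-- the Legendre integrand -/
noncomputable def Fy (y : Fin n → ℝ) : (Fin n → ℝ) → ℝ :=
  fun x => ∑ i, y i * x i - U φ x

lemma Fy_eq (y x : Fin n → ℝ) :
    Fy φ y x = (1/2:ℝ) * ∑ i, y i ^ 2 - (1/2:ℝ) * ∑ i, (x i - y i) ^ 2 - φ x := by
  have key : ∑ i, (y i * x i) = (1/2:ℝ) * ∑ i, y i ^ 2 + (1/2:ℝ) * ∑ i, x i ^ 2
      - (1/2:ℝ) * ∑ i, (x i - y i) ^ 2 := by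
    rw [Finset.mul_sum, Finset.mul_sum, Finset.mul_sum, ← Finset.sum_add_distrib,
      ← Finset.sum_sub_distrib]
    exact Finset.sum_congr rfl fun i _ => by ring
  unfold Fy U
  rw [key]
  ring

lemma contFy (hφ : ContDiff ℝ (⊤ : ℕ∞) φ) (y : Fin n → ℝ) : Continuous (Fy φ y) := by
  apply Continuous.sub _ ((contDiff_U hφ).continuous)
  exact continuous_finset_sum _ fun i _ => (continuous_const.mul (continuous_apply i))

lemma exists_max (hφ : ContDiff ℝ (⊤ : ℕ∞) φ) (hper : ZPer φ) (y : Fin n → ℝ) :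
    ∃ x₀, ∀ x, Fy φ y x ≤ Fy φ y x₀ := by
  obtain ⟨C, hC0, hC⟩ := phi_bound hφ hper
  set R : ℝ := 2 * C + 2 with hR
  have hR0 : 0 < R := by linarith
  set K : Set (Fin n → ℝ) := Set.Icc (fun i => y i - R) (fun i => y i + R) with hK
  have hyK : y ∈ K := by
    rw [hK, Set.mem_Icc]
    constructor <;> (rw [Pi.le_def]; intro i; simp; linarith)
  obtain ⟨x₀, _, hmax⟩ := (isCompact_Icc (a := fun i => y i - R) (b := fun i => y i + R)).exists_isMaxOn
    ⟨y, hyK⟩ (contFy hφ y).continuousOn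
  refine ⟨x₀, fun x => ?_⟩
  by_cases hx : x ∈ K
  · exact hmax hx
  · -- outside the box, value is less than at y
    have hout : Fy φ y x < Fy φ y y := by
      rw [Fy_eq, Fy_eq]
      have h1 : ∑ i, (x i - y i) ^ 2 > R ^ 2 := by
        rw [hK, Set.mem_Icc] at hx
        push_neg at hx
        have : ∃ i, x i < y i - R ∨ y i + R < x i := by
          by_contra hcon
          push_neg at hcon
          apply hx (fun i => by have := hcon i; simp; linarith) -- first ≤
          rw [Pi.le_def]; intro i; have := hcon i; simp; linarith
        obtain ⟨i, hi⟩ := this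
        have h2 : R ^ 2 < (x i - y i) ^ 2 := by
          rcases hi with h | h
          · nlinarith
          · nlinarith
        calc R ^ 2 < (x i - y i) ^ 2 := h2
          _ ≤ ∑ j, (x j - y j) ^ 2 :=
            Finset.single_le_sum (f := fun j => (x j - y j) ^ 2) (fun j _ => sq_nonneg _) (Finset.mem_univ i)
      have h3 : ∑ i, (y i - y i) ^ 2 = 0 := by simp
      have h5 := abs_le.1 (hC x)
      have h6 := abs_le.1 (hC y)
      rw [h3]
      have : (1/2:ℝ) * R ^ 2 > 2 * C := by nlinarith
      nlinarith
    exact le_trans hout.le (hmax hyK)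

lemma max_crit (hφ : ContDiff ℝ (⊤ : ℕ∞) φ) {y x₀ : Fin n → ℝ}
    (hmax : ∀ x, Fy φ y x ≤ Fy φ y x₀) : gg φ x₀ = y := by
  have hlin : HasFDerivAt (fun x : Fin n → ℝ => ∑ i, y i * x i)
      (∑ j, y j • ContinuousLinearMap.proj (R := ℝ) (φ := fun _ : Fin n => ℝ) j) x₀ := by
    apply HasFDerivAt.fun_sum
    intro j _
    exact (hasFDerivAt_apply (𝕜 := ℝ) j x₀).const_mul (y j)
  have hF : HasFDerivAt (Fy φ y) _ x₀ := hlin.sub (hasFDerivAt_U hφ x₀)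
  have hloc : IsLocalMax (Fy φ y) x₀ := Filter.Eventually.of_forall hmax
  have hzero := hloc.hasFDerivAt_eq_zero hF
  funext i
  have happ := congrArg (fun L => L (Pi.single i 1 : Fin n → ℝ)) hzero
  simp only [ContinuousLinearMap.sub_apply, ContinuousLinearMap.zero_apply,
    ContinuousLinearMap.coe_sum', Finset.sum_apply, ContinuousLinearMap.coe_smul',
    Pi.smul_apply, ContinuousLinearMap.proj_apply] at happ
  have h1 : ∑ j, y j • (Pi.single i 1 : Fin n → ℝ) j = y i := by
    simp [Pi.single_apply, Finset.sum_ite_eq']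
  rw [h1] at happ
  have h2 : gg φ x₀ i = ((∑ j, x₀ j • ContinuousLinearMap.proj (R := ℝ)
      (φ := fun _ : Fin n => ℝ) j) + fderiv ℝ φ x₀) (Pi.single i 1) := by
    show pd i (U φ) x₀ = _
    unfold pd
    rw [(hasFDerivAt_U hφ x₀).fderiv]
  rw [h2]
  linarith [sub_eq_zero.1 happ]

lemma gg_surj (hφ : ContDiff ℝ (⊤ : ℕ∞) φ) (hper : ZPer φ) :
    Function.Surjective (gg φ) := by
  intro y
  obtain ⟨x₀, hmax⟩ := exists_max hφ hper y
  exact ⟨x₀, max_crit hφ hmax⟩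

variable (φ) in
/-- Legendre transform -/
noncomputable def vv : (Fin n → ℝ) → ℝ := fun y => sSup (Set.range (Fy φ y))

lemma vv_eq_max {y x₀ : Fin n → ℝ} (hmax : ∀ x, Fy φ y x ≤ Fy φ y x₀) :
    vv φ y = Fy φ y x₀ :=
  IsGreatest.csSup_eq ⟨⟨x₀, rfl⟩, by rintro _ ⟨x, rfl⟩; exact hmax x⟩

lemma key_identity (hφ : ContDiff ℝ (⊤ : ℕ∞) φ) (hper : ZPer φ)
    (hpos : ∀ x, (hess (U φ) x).PosDef) (x : Fin n → ℝ) :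
    vv φ (gg φ x) + U φ x = ∑ i, gg φ x i * x i := by
  obtain ⟨x₀, hmax⟩ := exists_max hφ hper (gg φ x)
  have hx₀ : x₀ = x := gg_inj hφ hpos (max_crit hφ hmax)
  rw [vv_eq_max hmax, hx₀]
  unfold Fy
  ring

lemma Fy_shift (hper : ZPer φ) (y x : Fin n → ℝ) (k : Fin n → ℤ) :
    Fy φ (y + fun i => (k i : ℝ)) (x + fun i => (k i : ℝ))
      = Fy φ y x + (∑ i, y i * (k i : ℝ) + (1/2:ℝ) * ∑ i, (k i : ℝ) ^ 2) := by
  have hφx : φ (x + fun i => (k i : ℝ)) = φ x := hper x k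
  unfold Fy U
  rw [hφx]
  simp only [Pi.add_apply]
  have e1 : ∑ i, ((y i + (k i:ℝ)) * (x i + (k i:ℝ)))
      - (1/2:ℝ) * ∑ i, (x i + (k i:ℝ)) ^ 2
      = (∑ i, y i * x i - (1/2:ℝ) * ∑ i, x i ^ 2)
        + (∑ i, y i * (k i:ℝ) + (1/2:ℝ) * ∑ i, (k i:ℝ) ^ 2) := by
    rw [Finset.mul_sum, Finset.mul_sum, Finset.mul_sum, ← Finset.sum_sub_distrib,
      ← Finset.sum_sub_distrib, ← Finset.sum_add_distrib, ← Finset.sum_add_distrib]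
    exact Finset.sum_congr rfl fun i _ => by ring
  linarith [e1]

lemma vv_shift (hφ : ContDiff ℝ (⊤ : ℕ∞) φ) (hper : ZPer φ) (y : Fin n → ℝ) (k : Fin n → ℤ) :
    vv φ (y + fun i => (k i : ℝ)) =
      vv φ y + (∑ i, y i * (k i : ℝ) + (1/2:ℝ) * ∑ i, (k i : ℝ) ^ 2) := by
  obtain ⟨x₀, hmax⟩ := exists_max hφ hper y
  have hmax' : ∀ z, Fy φ (y + fun i => (k i : ℝ)) z
      ≤ Fy φ (y + fun i => (k i : ℝ)) (x₀ + fun i => (k i : ℝ)) := by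
    intro z
    have hz : z = (z - fun i => (k i : ℝ)) + fun i => (k i : ℝ) := by
      funext i; simp
    rw [hz, Fy_shift hper, Fy_shift hper]
    have := hmax (z - fun i => (k i : ℝ))
    linarith
  rw [vv_eq_max hmax, vv_eq_max hmax', Fy_shift hper]

lemma sq_expand (y : Fin n → ℝ) (k : Fin n → ℤ) :
    ∑ i, (y i + (k i : ℝ)) ^ 2 = ∑ i, y i ^ 2 + 2 * ∑ i, y i * (k i:ℝ) + ∑ i, (k i:ℝ) ^ 2 := by
  rw [Finset.mul_sum, ← Finset.sum_add_distrib, ← Finset.sum_add_distrib]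
  exact Finset.sum_congr rfl fun i _ => by ring

variable (φ) in
/-- periodic part of the Legendre transform -/
noncomputable def psi : (Fin n → ℝ) → ℝ := fun y => vv φ y - (1/2:ℝ) * ∑ i, y i ^ 2

lemma psi_per (hφ : ContDiff ℝ (⊤ : ℕ∞) φ) (hper : ZPer φ) : ZPer (psi φ) := by
  intro y k
  unfold psi
  rw [vv_shift hφ hper y k]
  simp only [Pi.add_apply]
  rw [sq_expand]
  ring

lemma contDiff_ginv (hφ : ContDiff ℝ (⊤ : ℕ∞) φ) (hper : ZPer φ)
    (hpos : ∀ x, (hess (U φ) x).PosDef) :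
    ContDiff ℝ (⊤ : ℕ∞) (Function.invFun (gg φ)) := by
  have hsurj := gg_surj hφ hper
  have hinj := gg_inj hφ hpos
  have hright : ∀ y, gg φ (Function.invFun (gg φ) y) = y :=
    fun y => Function.invFun_eq (hsurj y)
  rw [contDiff_iff_contDiffAt]
  intro y
  obtain ⟨a, rfl⟩ := hsurj y
  have hdet : IsUnit (hess (U φ) a).det := ((hpos a).det_pos).ne'.isUnit
  haveI := (hess (U φ) a).invertibleOfIsUnitDet hdet
  set eqv : (Fin n → ℝ) ≃L[ℝ] (Fin n → ℝ) :=
    (Matrix.toLinearEquiv' (hess (U φ) a) ‹_›).toContinuousLinearEquiv with heqv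
  have hfd : HasFDerivAt (gg φ) (eqv : (Fin n → ℝ) →L[ℝ] (Fin n → ℝ)) a := by
    have h := hasFDerivAt_gg hφ hpos a
    exact h
  have hca : ContDiffAt ℝ (⊤ : ℕ∞) (gg φ) a := (contDiff_gg hφ).contDiffAt
  have hn : ((⊤:ℕ∞) : WithTop ℕ∞) ≠ 0 := by simp
  have h1 := hca.to_localInverse (f' := eqv) hfd hn
  apply h1.congr_of_eventuallyEq
  have h2 := (hca.hasStrictFDerivAt' hfd hn).eventually_right_inverse
  exact h2.mono fun z hz => hinj (by rw [hright z]; exact hz.symm)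

lemma contDiff_vv (hφ : ContDiff ℝ (⊤ : ℕ∞) φ) (hper : ZPer φ)
    (hpos : ∀ x, (hess (U φ) x).PosDef) :
    ContDiff ℝ (⊤ : ℕ∞) (vv φ) := by
  set G : (Fin n → ℝ) → ℝ := fun x => ∑ i, gg φ x i * x i - U φ x with hG
  have hGc : ContDiff ℝ (⊤ : ℕ∞) G := by
    apply ContDiff.sub _ (contDiff_U hφ)
    apply ContDiff.sum
    intro i _
    exact (contDiff_pd (contDiff_U hφ) i).mul (contDiff_apply ℝ ℝ i)
  have hkey : ∀ x, vv φ (gg φ x) = G x := by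
    intro x
    have h := key_identity hφ hper hpos x
    show vv φ (gg φ x) = ∑ i, gg φ x i * x i - U φ x
    linarith
  have hvv : vv φ = fun y => G (Function.invFun (gg φ) y) := by
    funext y
    obtain ⟨a, rfl⟩ := gg_surj hφ hper y
    rw [hkey a]
    congr 1
    exact (Function.leftInverse_invFun (gg_inj hφ hpos) a).symm
  rw [hvv]
  exact hGc.comp (contDiff_ginv hφ hper hpos)
end

theorem legendre_transform_structure {n : ℕ} (φ : (Fin n → ℝ) → ℝ)
    (hφ : ContDiff ℝ (⊤ : ℕ∞) φ) (hper : ZPer φ)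
    (hpos : ∀ x, (hess (fun y => (1 / 2 : ℝ) * ∑ i, y i ^ 2 + φ y) x).PosDef) :
    Function.Bijective
      (fun x : Fin n → ℝ =>
        fun i => pd i (fun y => (1 / 2 : ℝ) * ∑ j, y j ^ 2 + φ y) x) ∧
    (∀ (x : Fin n → ℝ) (k : Fin n → ℤ), ∀ i,
      pd i (fun y => (1 / 2 : ℝ) * ∑ j, y j ^ 2 + φ y) (x + fun i => (k i : ℝ)) =
        pd i (fun y => (1 / 2 : ℝ) * ∑ j, y j ^ 2 + φ y) x + (k i : ℝ)) ∧
    ContDiff ℝ (⊤ : ℕ∞)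
      (fun y : Fin n → ℝ =>
        sSup (Set.range fun x : Fin n → ℝ =>
          ∑ i, y i * x i - ((1 / 2 : ℝ) * ∑ j, x j ^ 2 + φ x))) ∧
    ∃ ψ : (Fin n → ℝ) → ℝ, ContDiff ℝ (⊤ : ℕ∞) ψ ∧ ZPer ψ ∧
      (∀ y, sSup (Set.range fun x : Fin n → ℝ =>
          ∑ i, y i * x i - ((1 / 2 : ℝ) * ∑ j, x j ^ 2 + φ x)) =
        (1 / 2 : ℝ) * ∑ i, y i ^ 2 + ψ y) ∧
      (∀ x, sSup (Set.range fun z : Fin n → ℝ =>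
          ∑ i, pd i (fun y => (1 / 2 : ℝ) * ∑ j, y j ^ 2 + φ y) x * z i -
            ((1 / 2 : ℝ) * ∑ j, z j ^ 2 + φ z)) +
          ((1 / 2 : ℝ) * ∑ j, x j ^ 2 + φ x) =
        ∑ i, pd i (fun y => (1 / 2 : ℝ) * ∑ j, y j ^ 2 + φ y) x * x i) := by
  have hpos' : ∀ x, (hess (U φ) x).PosDef := hpos
  refine ⟨⟨gg_inj hφ hpos', gg_surj hφ hper⟩, fun x k i => gg_per hφ hper x k i,
    contDiff_vv hφ hper hpos', psi φ, ?_, psi_per hφ hper, fun y => ?_, fun x => ?_⟩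
  · -- smoothness of psi
    have hq : ContDiff ℝ (⊤ : ℕ∞) (fun y : Fin n → ℝ => (1/2:ℝ) * ∑ i, y i ^ 2) :=
      (contDiff_const (c := (1/2:ℝ))).mul
        (ContDiff.sum fun j (_ : j ∈ Finset.univ) => (contDiff_apply ℝ ℝ j).pow 2)
    exact (contDiff_vv hφ hper hpos').sub hq
  · show vv φ y = (1/2:ℝ) * ∑ i, y i ^ 2 + psi φ y
    unfold psi
    ring
  · exact key_identity hφ hper hpos' x
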